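/- Let 1 < p < ∞ and n ∈ ℕ. For any u ∈ S_p^1(ℝⁿ) ∩ C^n_loc(ℝⁿ) and any x, x' ∈ ℝⁿ: |u(x) − u(x')| ≤ [ ((1+p)^{1/p} + |x−x'|^{(p−1)/p})ⁿ − (1+p)^{n/p} ] ‖u‖_{S_p^1(ℝⁿ)}. -/

import Mathlib

open MeasureTheory Finset
open scoped ENNReal

namespace OscAux

variable {p : ℝ}

lemma continuous_sgn_rpow (hp : 1 < p) :
    Continuous fun r : ℝ => Real.sign r * |r| ^ (p - 1) := by
  have hcont : Continuous fun r : ℝ => |r| ^ (p - 1) :=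
    continuous_abs.rpow_const (fun x => Or.inr (by linarith))
  rw [continuous_iff_continuousAt]
  intro a
  rcases lt_trichotomy a 0 with ha | rfl | ha
  · have : (fun r : ℝ => Real.sign r * |r| ^ (p - 1)) =ᶠ[nhds a]
        fun r => (-1) * |r| ^ (p - 1) := by
      filter_upwards [Iio_mem_nhds ha] with r hr
      rw [Real.sign_of_neg hr]
    exact (((continuous_const.mul hcont).continuousAt).congr this.symm)
  · have key : Filter.Tendsto (fun r : ℝ => Real.sign r * |r| ^ (p - 1)) (nhds 0) (nhds 0) := by
      apply squeeze_zero_norm (a := fun r : ℝ => |r| ^ (p - 1))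
      · intro t
        rw [Real.norm_eq_abs, abs_mul, Real.abs_rpow_of_nonneg (abs_nonneg t), abs_abs]
        calc |Real.sign t| * |t| ^ (p - 1) ≤ 1 * |t| ^ (p - 1) := by
              apply mul_le_mul_of_nonneg_right _ (Real.rpow_nonneg (abs_nonneg t) _)
              rcases lt_trichotomy t 0 with h | rfl | h
              · simp [Real.sign_of_neg h]
              · simp
              · simp [Real.sign_of_pos h]
          _ = |t| ^ (p - 1) := one_mul _
      · have := hcont.tendsto 0
        simpa [Real.zero_rpow (by linarith : p - 1 ≠ 0)] using this
    unfold ContinuousAt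
    simpa [Real.sign_zero] using key
  · have : (fun r : ℝ => Real.sign r * |r| ^ (p - 1)) =ᶠ[nhds a]
        fun r => 1 * |r| ^ (p - 1) := by
      filter_upwards [Ioi_mem_nhds ha] with r hr
      rw [Real.sign_of_pos hr]
    exact (((continuous_const.mul hcont).continuousAt).congr this.symm)

lemma hasDerivAt_abs_rpow (hp : 1 < p) (r : ℝ) :
    HasDerivAt (fun s : ℝ => |s| ^ p) (p * (Real.sign r * |r| ^ (p - 1))) r := by
  rcases lt_trichotomy r 0 with hr | rfl | hr
  · have h1 : HasDerivAt (fun s : ℝ => (-s) ^ p) (p * (-r) ^ (p - 1) * (-1)) r := by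
      have := (Real.hasDerivAt_rpow_const (x := -r) (p := p) (Or.inl (by linarith))).comp r
        ((hasDerivAt_id r).neg)
      simpa [Function.comp_def] using this
    have h2 : (fun s : ℝ => |s| ^ p) =ᶠ[nhds r] fun s => (-s) ^ p := by
      filter_upwards [Iio_mem_nhds hr] with s hs
      rw [abs_of_neg hs]
    have := h1.congr_of_eventuallyEq h2
    refine this.congr_deriv ?_
    rw [Real.sign_of_neg hr, abs_of_neg hr]; ring
  · rw [Real.sign_zero]
    simp only [zero_mul, mul_zero]
    rw [hasDerivAt_iff_tendsto_slope]
    apply squeeze_zero_norm' (a := fun s : ℝ => |s| ^ (p - 1))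
    · filter_upwards [self_mem_nhdsWithin] with s (hs : s ≠ 0)
      have : slope (fun s : ℝ => |s| ^ p) 0 s = |s| ^ p / s := by
        simp [slope_def_field, Real.zero_rpow (by positivity : p ≠ 0)]
        try ring
      rw [this, Real.norm_eq_abs, abs_div, Real.abs_rpow_of_nonneg (abs_nonneg s), abs_abs]
      rw [div_le_iff₀ (by positivity : (0:ℝ) < |s|)]
      rw [← Real.rpow_add_one (by simpa using hs) (p-1)]
      norm_num
    · have hcont : Continuous fun s : ℝ => |s| ^ (p - 1) :=
        continuous_abs.rpow_const (fun x => Or.inr (by linarith))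
      have := (hcont.tendsto 0).mono_left (nhdsWithin_le_nhds (s := {(0:ℝ)}ᶜ))
      simpa [Real.zero_rpow (by linarith : p - 1 ≠ 0)] using this
  · have h1 : HasDerivAt (fun s : ℝ => s ^ p) (p * r ^ (p - 1)) r :=
      Real.hasDerivAt_rpow_const (Or.inl (ne_of_gt hr))
    have h2 : (fun s : ℝ => |s| ^ p) =ᶠ[nhds r] fun s => s ^ p := by
      filter_upwards [Ioi_mem_nhds hr] with s hs
      rw [abs_of_pos hs]
    have := h1.congr_of_eventuallyEq h2
    refine this.congr_deriv ?_
    rw [Real.sign_of_pos hr, abs_of_pos hr]; ring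

lemma rpow_young {a b : ℝ} (hp : 1 < p) (ha : 0 ≤ a) (hb : 0 ≤ b) :
    a ^ (p - 1) * b ≤ a ^ p + b ^ p := by
  rcases le_total a b with h | h
  · calc a ^ (p - 1) * b ≤ b ^ (p - 1) * b := by
          apply mul_le_mul_of_nonneg_right (Real.rpow_le_rpow ha h (by linarith)) hb
      _ = b ^ p := by rw [← Real.rpow_add_one' (by positivity) (by linarith)]; norm_num
      _ ≤ a ^ p + b ^ p := le_add_of_nonneg_left (by positivity)
  · calc a ^ (p - 1) * b ≤ a ^ (p - 1) * a := by
          apply mul_le_mul_of_nonneg_left h (by positivity)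
      _ = a ^ p := by rw [mul_comm, ← Real.rpow_one_add' (by positivity) (by linarith)]; norm_num
      _ ≤ a ^ p + b ^ p := le_add_of_nonneg_right (by positivity)


def sEmb (n : ℕ) : Fin n ↪ Fin (n+1) := ⟨Fin.succ, Fin.succ_injective n⟩

@[simp] lemma sEmb_apply {n : ℕ} (i : Fin n) : sEmb n i = i.succ := rfl

lemma continuous_cons_pair {n : ℕ} :
    Continuous fun q : ℝ × (Fin n → ℝ) => (Fin.cons q.1 q.2 : Fin (n+1) → ℝ) := by
  apply continuous_pi
  intro j
  cases j using Fin.cases with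
  | zero => simpa using continuous_fst
  | succ k => simpa [Function.comp_def] using (continuous_apply k).comp continuous_snd

lemma continuous_cons {n : ℕ} (t : ℝ) :
    Continuous fun z : Fin n → ℝ => (Fin.cons t z : Fin (n+1) → ℝ) :=
  continuous_cons_pair.comp (continuous_const.prodMk continuous_id)

lemma continuous_update_pt {n : ℕ} (y : Fin n → ℝ) (i : Fin n) :
    Continuous fun t : ℝ => Function.update y i t := by
  apply continuous_pi
  intro j
  by_cases h : j = i
  · subst h; simpa [Function.update_apply] using continuous_id'
  · simpa [Function.update_apply, h] using continuous_const

lemma update_zero_eq_cons {n : ℕ} (y : Fin (n+1) → ℝ) (t : ℝ) :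
    Function.update y 0 t = Fin.cons t (Fin.tail y) := by
  ext j
  cases j using Fin.cases with
  | zero => simp
  | succ k => simp [Function.update_apply, Fin.succ_ne_zero, Fin.tail]

lemma lintegral_cons {n : ℕ} {f : (Fin (n+1) → ℝ) → ℝ≥0∞} (hf : Measurable f) :
    ∫⁻ y, f y = ∫⁻ t : ℝ, ∫⁻ z : Fin n → ℝ, f (Fin.cons t z) := by
  have hmp := (volume_preserving_piFinSuccAbove (fun _ : Fin (n+1) => ℝ) 0).symm
  calc ∫⁻ y, f y
      = ∫⁻ a : ℝ × (Fin n → ℝ),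
          f ((MeasurableEquiv.piFinSuccAbove (fun _ : Fin (n+1) => ℝ) 0).symm a) :=
        (hmp.lintegral_comp hf).symm
    _ = ∫⁻ t : ℝ, ∫⁻ z : Fin n → ℝ,
          f ((MeasurableEquiv.piFinSuccAbove (fun _ : Fin (n+1) => ℝ) 0).symm (t, z)) := by
        rw [Measure.volume_eq_prod]
        exact lintegral_prod _ (hf.comp hmp.measurable).aemeasurable
    _ = ∫⁻ t : ℝ, ∫⁻ z : Fin n → ℝ, f (Fin.cons t z) := by
        congr 1; ext t; congr 1; ext z; congr 1
        rw [MeasurableEquiv.piFinSuccAbove_symm_apply]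
        exact Fin.insertNth_zero' t z

lemma sum_split {n : ℕ} (f : Finset (Fin (n+1)) → ℝ≥0∞) :
    ((∑ S : Finset (Fin n), f (S.map (sEmb n))) +
      ∑ S : Finset (Fin n), f (insert 0 (S.map (sEmb n)))) =
      ∑ S : Finset (Fin (n+1)), f S := by
  classical
  have hsplit := Finset.sum_filter_add_sum_filter_not
    (Finset.univ : Finset (Finset (Fin (n+1)))) (fun S => (0 : Fin (n+1)) ∉ S) f
  rw [← hsplit]
  congr 1
  · refine Finset.sum_nbij' (i := fun S => S.map (sEmb n))
      (j := fun S' => S'.preimage Fin.succ (Fin.succ_injective n).injOn) ?_ ?_ ?_ ?_ ?_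
    · intro S _
      simp only [Finset.mem_filter, Finset.mem_univ, true_and]
      intro h0
      rcases Finset.mem_map.1 h0 with ⟨i, _, hi⟩
      exact Fin.succ_ne_zero i hi
    · intro S' _; exact Finset.mem_univ _
    · intro S _
      ext i
      simp [Finset.mem_preimage]
    · intro S' hS'
      simp only [Finset.mem_filter, Finset.mem_univ, true_and] at hS'
      ext j
      cases j using Fin.cases with
      | zero =>
        simp only [Finset.mem_map]
        constructor
        · rintro ⟨i, _, hi⟩; exact absurd hi (by simpa using Fin.succ_ne_zero i)
        · intro h; exact absurd h hS'
      | succ k =>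
        simp [Finset.mem_preimage]
    · intro S _; rfl
  · refine Finset.sum_nbij' (i := fun S => insert 0 (S.map (sEmb n)))
      (j := fun S' => (S'.erase 0).preimage Fin.succ (Fin.succ_injective n).injOn) ?_ ?_ ?_ ?_ ?_
    · intro S _
      simp
    · intro S' _; exact Finset.mem_univ _
    · intro S _
      ext i
      simp [Finset.mem_preimage, Finset.mem_erase, Fin.succ_ne_zero]
    · intro S' hS'
      simp only [Finset.mem_filter, Finset.mem_univ, true_and, not_not] at hS'
      ext j
      cases j using Fin.cases with
      | zero => simpa using hS'
      | succ k =>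
        simp [Finset.mem_preimage, Finset.mem_erase, Fin.succ_ne_zero]
    · intro S _; rfl

section Slice

variable {n : ℕ} (D : Finset (Fin (n+1)) → (Fin (n+1) → ℝ) → ℝ)

/-- Slice of the mixed-derivative family through coordinate `0` at value `t`,
with base set `B`. -/
def sliceD (B : Finset (Fin (n+1))) (t : ℝ) : Finset (Fin n) → (Fin n → ℝ) → ℝ :=
  fun S z => D (B ∪ S.map (sEmb n)) (Fin.cons t z)

lemma slice_deriv
    (hDderiv : ∀ (S : Finset (Fin (n+1))) (i : Fin (n+1)), i ∉ S → ∀ η,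
      HasDerivAt (fun t => D S (Function.update η i t)) (D (insert i S) η) (η i))
    (B : Finset (Fin (n+1))) (hB : ∀ i : Fin n, i.succ ∉ B) (t : ℝ) :
    ∀ (S : Finset (Fin n)) (i : Fin n), i ∉ S → ∀ z : Fin n → ℝ,
      HasDerivAt (fun s => sliceD D B t S (Function.update z i s))
        (sliceD D B t (insert i S) z) (z i) := by
  intro S i hiS z
  have hmem : i.succ ∉ B ∪ S.map (sEmb n) := by
    rw [Finset.mem_union]
    rintro (h | h)
    · exact hB i h
    · rcases Finset.mem_map.1 h with ⟨k, hk, hki⟩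
      rw [show sEmb n k = k.succ from rfl] at hki
      exact hiS (by rwa [← Fin.succ_injective n hki])
  have h := hDderiv (B ∪ S.map (sEmb n)) i.succ hmem (Fin.cons t z)
  have hfun : (fun s => D (B ∪ S.map (sEmb n)) (Function.update (Fin.cons t z) i.succ s)) =
      fun s => sliceD D B t S (Function.update z i s) := by
    funext s
    rw [sliceD, ← Fin.cons_update]
  have hset : insert i.succ (B ∪ S.map (sEmb n)) = B ∪ (insert i S).map (sEmb n) := by
    rw [Finset.map_insert, Finset.union_insert]
    rfl
  have hpt : (Fin.cons t z : Fin (n+1) → ℝ) i.succ = z i := by simp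
  rw [hfun, hset, hpt] at h
  exact h

lemma slice_cont (hDcont : ∀ S, Continuous (D S)) (B : Finset (Fin (n+1))) (t : ℝ) :
    ∀ S, Continuous (sliceD D B t S) :=
  fun S => (hDcont _).comp (continuous_cons t)

end Slice

lemma oneD_sup (hp : 1 < p) {g g' : ℝ → ℝ}
    (hderiv : ∀ t, HasDerivAt g (g' t) t) (hg' : Continuous g') (s : ℝ) :
    ENNReal.ofReal (|g s| ^ p) ≤
      ENNReal.ofReal (1 + p) * ∫⁻ t, ENNReal.ofReal (|g t| ^ p + |g' t| ^ p) := by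
  have hp0 : (0:ℝ) < p := lt_trans one_pos hp
  set R := ∫⁻ t, ENNReal.ofReal (|g t| ^ p + |g' t| ^ p) with hRdef
  by_cases hR : R = ⊤
  · rw [hR, ENNReal.mul_top (by simp [ENNReal.ofReal_eq_zero]; linarith)]
    exact le_top
  set G : ℝ → ℝ := fun t => |g t| ^ p with hGdef
  set Gd : ℝ → ℝ := fun t => p * (Real.sign (g t) * |g t| ^ (p - 1)) * g' t with hGddef
  have hgc : Continuous g := by
    rw [continuous_iff_continuousAt]; exact fun t => (hderiv t).continuousAt
  have hG : ∀ t, HasDerivAt G (Gd t) t := fun t =>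
    (hasDerivAt_abs_rpow hp (g t)).comp t (hderiv t)
  have hGc : Continuous G := hgc.abs.rpow_const (fun _ => Or.inr hp0.le)
  have hGdc : Continuous Gd :=
    (continuous_const.mul ((continuous_sgn_rpow hp).comp hgc)).mul hg'
  set H : ℝ → ℝ := fun t => |g t| ^ p + |g' t| ^ p with hHdef
  have hHc : Continuous H :=
    hGc.add (hg'.abs.rpow_const (fun _ => Or.inr hp0.le))
  have hHnn : ∀ t, 0 ≤ H t := fun t => by positivity
  have hGd_le : ∀ t, |Gd t| ≤ p * H t := by
    intro t
    have h1 : |Gd t| = p * ((|Real.sign (g t)| * |g t| ^ (p - 1)) * |g' t|) := by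
      rw [hGddef]; simp only [abs_mul, abs_abs, abs_of_pos hp0,
        Real.abs_rpow_of_nonneg (abs_nonneg _), abs_abs]; ring
    rw [h1]
    apply mul_le_mul_of_nonneg_left _ hp0.le
    calc (|Real.sign (g t)| * |g t| ^ (p - 1)) * |g' t|
        ≤ (1 * |g t| ^ (p - 1)) * |g' t| := by
          apply mul_le_mul_of_nonneg_right _ (abs_nonneg _)
          apply mul_le_mul_of_nonneg_right _ (by positivity)
          rcases lt_trichotomy (g t) 0 with h | h | h
          · simp [Real.sign_of_neg h]
          · simp [h]
          · simp [Real.sign_of_pos h]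
      _ = |g t| ^ (p - 1) * |g' t| := by ring
      _ ≤ |g t| ^ p + |g' t| ^ p := rpow_young hp (abs_nonneg _) (abs_nonneg _)
  have hHint : Integrable H := by
    refine ⟨hHc.aestronglyMeasurable, ?_⟩
    rw [hasFiniteIntegral_iff_ofReal (Filter.Eventually.of_forall hHnn)]
    exact lt_top_iff_ne_top.2 hR
  have hGint : Integrable G := by
    refine hHint.mono hGc.aestronglyMeasurable (Filter.Eventually.of_forall fun t => ?_)
    rw [Real.norm_eq_abs, Real.norm_eq_abs, abs_of_nonneg (by positivity : (0:ℝ) ≤ G t),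
      abs_of_nonneg (hHnn t)]
    exact le_add_of_nonneg_right (by positivity)
  have hGdint : Integrable Gd := by
    refine (hHint.const_mul p).mono hGdc.aestronglyMeasurable
      (Filter.Eventually.of_forall fun t => ?_)
    rw [Real.norm_eq_abs, Real.norm_eq_abs, abs_of_nonneg (by positivity : (0:ℝ) ≤ p * H t)]
    exact hGd_le t
  obtain ⟨t₀, ht₀mem, ht₀'⟩ := IsCompact.exists_isMinOn (isCompact_Icc (a := s - 1) (b := s))
    ⟨s, by constructor <;> linarith⟩ hGc.continuousOn
  have ht₀ : ∀ t ∈ Set.Icc (s-1) s, G t₀ ≤ G t := fun t ht => ht₀' ht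
  have hGt₀ : G t₀ ≤ ∫ t, G t := by
    have h1 : G t₀ * (volume (Set.Icc (s-1) s)).toReal ≤ ∫ t in Set.Icc (s-1) s, G t :=
      setIntegral_ge_of_const_le_real measurableSet_Icc (by rw [Real.volume_Icc]; exact ENNReal.ofReal_ne_top) ht₀ hGint.integrableOn
    have h2 : (volume (Set.Icc (s-1) s)).toReal = 1 := by
      rw [Real.volume_Icc]; norm_num
    have h3 : ∫ t in Set.Icc (s-1) s, G t ≤ ∫ t, G t :=
      setIntegral_le_integral hGint (Filter.Eventually.of_forall fun t => by positivity)
    rw [h2, mul_one] at h1; linarith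
  have hftc : ∫ t in t₀..s, Gd t = G s - G t₀ :=
    intervalIntegral.integral_eq_sub_of_hasDerivAt (fun t _ => hG t)
      (hGdc.intervalIntegrable _ _)
  have habs : |∫ t in t₀..s, Gd t| ≤ ∫ t, |Gd t| := by
    calc |∫ t in t₀..s, Gd t| ≤ ∫ t in Set.uIoc t₀ s, |Gd t| := by
          simpa [Real.norm_eq_abs] using intervalIntegral.norm_integral_le_integral_norm_uIoc
            (f := Gd) (a := t₀) (b := s) (μ := volume)
      _ ≤ ∫ t, |Gd t| :=
          setIntegral_le_integral hGdint.abs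
            (Filter.Eventually.of_forall fun t => abs_nonneg _)
  have hGs : G s ≤ (1 + p) * ∫ t, H t := by
    have h4 : ∫ t, |Gd t| ≤ ∫ t, p * H t :=
      integral_mono hGdint.abs (hHint.const_mul p) hGd_le
    have h5 : ∫ t, G t ≤ ∫ t, H t :=
      integral_mono hGint hHint (fun t => le_add_of_nonneg_right (by positivity))
    have h6 : ∫ t, p * H t = p * ∫ t, H t := MeasureTheory.integral_const_mul p H
    have h7 : G s = G t₀ + ∫ t in t₀..s, Gd t := by rw [hftc]; ring
    have h8 : G s ≤ G t₀ + |∫ t in t₀..s, Gd t| := by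
      rw [h7]; exact add_le_add_right (le_abs_self _) _
    nlinarith [abs_nonneg (∫ t in t₀..s, Gd t)]
  calc ENNReal.ofReal (|g s| ^ p) ≤ ENNReal.ofReal ((1 + p) * ∫ t, H t) :=
        ENNReal.ofReal_le_ofReal hGs
    _ = ENNReal.ofReal (1 + p) * ENNReal.ofReal (∫ t, H t) :=
        ENNReal.ofReal_mul (by linarith)
    _ = ENNReal.ofReal (1 + p) * R := by
        rw [ofReal_integral_eq_lintegral_ofReal hHint (Filter.Eventually.of_forall hHnn)]


-- measurability helper
lemma meas_aux (hp0 : 0 ≤ p) {n : ℕ} {D : Finset (Fin n) → (Fin n → ℝ) → ℝ}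
    (hDcont : ∀ S, Continuous (D S))
    (S : Finset (Fin n)) : Measurable fun y => ENNReal.ofReal (|D S y| ^ p) :=
  (ENNReal.continuous_ofReal.comp
    (((hDcont S).abs.rpow_const fun _ => Or.inr hp0))).measurable

lemma meas_aux2 (hp0 : 0 ≤ p) {n : ℕ} {D : Finset (Fin (n+1)) → (Fin (n+1) → ℝ) → ℝ}
    (hDcont : ∀ S, Continuous (D S)) (S : Finset (Fin (n+1))) :
    Measurable fun q : ℝ × (Fin n → ℝ) => ENNReal.ofReal (|D S (Fin.cons q.1 q.2)| ^ p) := by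
  have : Continuous fun q : ℝ × (Fin n → ℝ) => D S (Fin.cons q.1 q.2) :=
    (hDcont S).comp continuous_cons_pair
  exact (ENNReal.continuous_ofReal.comp
    (this.abs.rpow_const fun _ => Or.inr hp0)).measurable

lemma meas_slice (hp0 : 0 ≤ p) {n : ℕ} {D : Finset (Fin (n+1)) → (Fin (n+1) → ℝ) → ℝ}
    (hDcont : ∀ S, Continuous (D S)) (B : Finset (Fin (n+1))) (S : Finset (Fin n)) :
    Measurable fun t : ℝ => ∫⁻ z, ENNReal.ofReal (|sliceD D B t S z| ^ p) :=
  Measurable.lintegral_prod_right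
    (f := fun t z => ENNReal.ofReal (|sliceD D B t S z| ^ p))
    (meas_aux2 hp0 hDcont (B ∪ S.map (sEmb n)))

theorem sup_bound (hp : 1 < p) : ∀ (n : ℕ) (D : Finset (Fin n) → (Fin n → ℝ) → ℝ),
    (∀ (S : Finset (Fin n)) (i : Fin n), i ∉ S → ∀ η,
      HasDerivAt (fun t => D S (Function.update η i t)) (D (insert i S) η) (η i)) →
    (∀ S, Continuous (D S)) → ∀ y : Fin n → ℝ,
    ENNReal.ofReal (|D ∅ y| ^ p) ≤
      ENNReal.ofReal (1+p) ^ n *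
        ∑ S : Finset (Fin n), ∫⁻ z, ENNReal.ofReal (|D S z| ^ p) := by
  intro n
  induction n with
  | zero =>
    intro D _ _ y
    have huniv : (Finset.univ : Finset (Finset (Fin 0))) = {∅} := by decide
    rw [huniv, Finset.sum_singleton, pow_zero, one_mul]
    have hconst : ∀ z : Fin 0 → ℝ, ENNReal.ofReal (|D ∅ z| ^ p) =
        ENNReal.ofReal (|D ∅ y| ^ p) := fun z => by rw [Subsingleton.elim z y]
    rw [lintegral_congr hconst, lintegral_const]
    have hvol : (volume : Measure (Fin 0 → ℝ)) Set.univ = 1 := by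
      rw [volume_pi, Measure.pi_univ]
      simp
    rw [hvol, mul_one]
  | succ n ih =>
    intro D hDderiv hDcont y
    have hp0 : (0:ℝ) ≤ p := by linarith
    -- 1D step in coordinate 0
    have hgd : ∀ t : ℝ, HasDerivAt (fun s => D ∅ (Function.update y 0 s))
        (D {0} (Function.update y 0 t)) t := by
      intro t
      have h := hDderiv ∅ 0 (Finset.notMem_empty 0) (Function.update y 0 t)
      have hfun : (fun s => D ∅ (Function.update (Function.update y 0 t) 0 s)) =
          fun s => D ∅ (Function.update y 0 s) := by
        funext s; rw [Function.update_idem]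
      have hpt : (Function.update y 0 t) 0 = t := Function.update_self 0 t y
      rw [hfun, hpt] at h
      simpa using h
    have hgc : Continuous fun t => D {0} (Function.update y 0 t) :=
      (hDcont {0}).comp (continuous_update_pt y 0)
    have h1 := oneD_sup hp hgd hgc (y 0)
    rw [Function.update_eq_self 0 y] at h1
    -- bound the inner integrand via the inductive hypothesis applied to slices
    have key : ∀ t : ℝ,
        ENNReal.ofReal (|D ∅ (Function.update y 0 t)| ^ p +
          |D {0} (Function.update y 0 t)| ^ p) ≤
        ENNReal.ofReal (1+p) ^ n *
          ((∑ S : Finset (Fin n), ∫⁻ z, ENNReal.ofReal (|sliceD D ∅ t S z| ^ p)) +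
           ∑ S : Finset (Fin n), ∫⁻ z, ENNReal.ofReal (|sliceD D {0} t S z| ^ p)) := by
      intro t
      rw [ENNReal.ofReal_add (by positivity) (by positivity), mul_add]
      have hB0 : ∀ i : Fin n, i.succ ∉ (∅ : Finset (Fin (n+1))) := fun i => Finset.notMem_empty _
      have hB1 : ∀ i : Fin n, i.succ ∉ ({0} : Finset (Fin (n+1))) := fun i => by
        simp [Fin.succ_ne_zero]
      have ihA := ih (sliceD D ∅ t) (slice_deriv D hDderiv ∅ hB0 t)
        (slice_cont D hDcont ∅ t) (Fin.tail y)
      have ihB := ih (sliceD D {0} t) (slice_deriv D hDderiv {0} hB1 t)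
        (slice_cont D hDcont {0} t) (Fin.tail y)
      have e1 : sliceD D ∅ t ∅ (Fin.tail y) = D ∅ (Function.update y 0 t) := by
        rw [sliceD, update_zero_eq_cons]; simp
      have e2 : sliceD D {0} t ∅ (Fin.tail y) = D {0} (Function.update y 0 t) := by
        rw [sliceD, update_zero_eq_cons]; simp
      rw [e1] at ihA
      rw [e2] at ihB
      exact add_le_add ihA ihB
    have h2 : (∫⁻ t, ENNReal.ofReal (|D ∅ (Function.update y 0 t)| ^ p +
          |D {0} (Function.update y 0 t)| ^ p)) ≤
        ENNReal.ofReal (1+p) ^ n * ∑ S : Finset (Fin (n+1)), ∫⁻ z, ENNReal.ofReal (|D S z| ^ p) := by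
      calc ∫⁻ t, ENNReal.ofReal (|D ∅ (Function.update y 0 t)| ^ p +
              |D {0} (Function.update y 0 t)| ^ p)
          ≤ ∫⁻ t, ENNReal.ofReal (1+p) ^ n *
              ((∑ S : Finset (Fin n), ∫⁻ z, ENNReal.ofReal (|sliceD D ∅ t S z| ^ p)) +
               ∑ S : Finset (Fin n), ∫⁻ z, ENNReal.ofReal (|sliceD D {0} t S z| ^ p)) :=
            lintegral_mono key
        _ = ENNReal.ofReal (1+p) ^ n * ∫⁻ t,
              ((∑ S : Finset (Fin n), ∫⁻ z, ENNReal.ofReal (|sliceD D ∅ t S z| ^ p)) +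
               ∑ S : Finset (Fin n), ∫⁻ z, ENNReal.ofReal (|sliceD D {0} t S z| ^ p)) :=
            lintegral_const_mul' _ _ (by simp [ENNReal.pow_ne_top])
        _ = ENNReal.ofReal (1+p) ^ n *
              ((∫⁻ t, ∑ S : Finset (Fin n), ∫⁻ z, ENNReal.ofReal (|sliceD D ∅ t S z| ^ p)) +
               ∫⁻ t, ∑ S : Finset (Fin n), ∫⁻ z, ENNReal.ofReal (|sliceD D {0} t S z| ^ p)) := by
            congr 1
            apply lintegral_add_left
            apply Finset.measurable_sum
            intro S _
            exact meas_slice hp0 hDcont ∅ S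
        _ = ENNReal.ofReal (1+p) ^ n *
              ((∑ S : Finset (Fin n), ∫⁻ t, ∫⁻ z, ENNReal.ofReal (|sliceD D ∅ t S z| ^ p)) +
               ∑ S : Finset (Fin n), ∫⁻ t, ∫⁻ z, ENNReal.ofReal (|sliceD D {0} t S z| ^ p)) := by
            congr 1
            congr 1 <;>
            · apply lintegral_finset_sum
              intro S _
              exact meas_slice hp0 hDcont _ S
        _ = ENNReal.ofReal (1+p) ^ n *
              ((∑ S : Finset (Fin n), ∫⁻ w, ENNReal.ofReal (|D (S.map (sEmb n)) w| ^ p)) +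
               ∑ S : Finset (Fin n), ∫⁻ w, ENNReal.ofReal (|D (insert 0 (S.map (sEmb n))) w| ^ p)) := by
            congr 1
            congr 1
            · apply Finset.sum_congr rfl
              intro S _
              calc ∫⁻ t, ∫⁻ z, ENNReal.ofReal (|sliceD D ∅ t S z| ^ p)
                  = ∫⁻ t, ∫⁻ z, ENNReal.ofReal (|D (S.map (sEmb n)) (Fin.cons t z)| ^ p) := by
                    simp [sliceD, ← Finset.insert_eq]
                _ = ∫⁻ w, ENNReal.ofReal (|D (S.map (sEmb n)) w| ^ p) :=
                    (lintegral_cons (meas_aux hp0 hDcont _)).symm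
            · apply Finset.sum_congr rfl
              intro S _
              calc ∫⁻ t, ∫⁻ z, ENNReal.ofReal (|sliceD D {0} t S z| ^ p)
                  = ∫⁻ t, ∫⁻ z, ENNReal.ofReal
                      (|D (insert 0 (S.map (sEmb n))) (Fin.cons t z)| ^ p) := by
                    simp [sliceD, ← Finset.insert_eq]
                _ = ∫⁻ w, ENNReal.ofReal (|D (insert 0 (S.map (sEmb n))) w| ^ p) :=
                    (lintegral_cons (meas_aux hp0 hDcont _)).symm
        _ = ENNReal.ofReal (1+p) ^ n *
              ∑ S : Finset (Fin (n+1)), ∫⁻ z, ENNReal.ofReal (|D S z| ^ p) := by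
            rw [sum_split (fun S' => ∫⁻ z, ENNReal.ofReal (|D S' z| ^ p))]
    calc ENNReal.ofReal (|D ∅ y| ^ p)
        ≤ ENNReal.ofReal (1 + p) * ∫⁻ t, ENNReal.ofReal (|D ∅ (Function.update y 0 t)| ^ p +
            |D {0} (Function.update y 0 t)| ^ p) := h1
      _ ≤ ENNReal.ofReal (1 + p) * (ENNReal.ofReal (1+p) ^ n *
            ∑ S : Finset (Fin (n+1)), ∫⁻ z, ENNReal.ofReal (|D S z| ^ p)) :=
          mul_le_mul_right h2 _
      _ = ENNReal.ofReal (1+p) ^ (n+1) *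
            ∑ S : Finset (Fin (n+1)), ∫⁻ z, ENNReal.ofReal (|D S z| ^ p) := by
          rw [pow_succ]; ring


lemma continuous_cons_left {n : ℕ} (z : Fin n → ℝ) :
    Continuous fun t : ℝ => (Fin.cons t z : Fin (n+1) → ℝ) :=
  continuous_cons_pair.comp (continuous_id.prodMk continuous_const)

lemma deriv0 {n : ℕ} (D : Finset (Fin (n+1)) → (Fin (n+1) → ℝ) → ℝ)
    (hDderiv : ∀ (S : Finset (Fin (n+1))) (i : Fin (n+1)), i ∉ S → ∀ η,
      HasDerivAt (fun t => D S (Function.update η i t)) (D (insert i S) η) (η i))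
    (S' : Finset (Fin (n+1))) (h0 : 0 ∉ S') (x : Fin (n+1) → ℝ) (t : ℝ) :
    HasDerivAt (fun s => D S' (Function.update x 0 s))
      (D (insert 0 S') (Function.update x 0 t)) t := by
  have h := hDderiv S' 0 h0 (Function.update x 0 t)
  have hfun : (fun s => D S' (Function.update (Function.update x 0 t) 0 s)) =
      fun s => D S' (Function.update x 0 s) := by
    funext s; rw [Function.update_idem]
  have hpt : (Function.update x 0 t) 0 = t := Function.update_self 0 t x
  rw [hfun, hpt] at h
  exact h

lemma cons_deriv {n : ℕ} (D : Finset (Fin (n+1)) → (Fin (n+1) → ℝ) → ℝ)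
    (hDderiv : ∀ (S : Finset (Fin (n+1))) (i : Fin (n+1)), i ∉ S → ∀ η,
      HasDerivAt (fun t => D S (Function.update η i t)) (D (insert i S) η) (η i))
    (S' : Finset (Fin (n+1))) (h0 : 0 ∉ S') (z : Fin n → ℝ) (t : ℝ) :
    HasDerivAt (fun s => D S' (Fin.cons s z))
      (D (insert 0 S') (Fin.cons t z)) t := by
  have h := deriv0 D hDderiv S' h0 (Fin.cons t z) t
  have h1 : ∀ s : ℝ, Function.update (Fin.cons t z : Fin (n+1) → ℝ) 0 s = Fin.cons s z :=
    fun s => by rw [update_zero_eq_cons, Fin.tail_cons]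
  rw [funext h1] at h
  simpa using h

lemma lintegral_cons' {n : ℕ} {f : (Fin (n+1) → ℝ) → ℝ≥0∞} (hf : Measurable f) :
    ∫⁻ y, f y = ∫⁻ z : Fin n → ℝ, ∫⁻ t : ℝ, f (Fin.cons t z) := by
  rw [lintegral_cons hf]
  exact lintegral_lintegral_swap ((hf.comp continuous_cons_pair.measurable).aemeasurable)

theorem main_aux (hp : 1 < p) : ∀ (n : ℕ) (D : Finset (Fin n) → (Fin n → ℝ) → ℝ),
    (∀ (S : Finset (Fin n)) (i : Fin n), i ∉ S → ∀ η,
      HasDerivAt (fun t => D S (Function.update η i t)) (D (insert i S) η) (η i)) →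
    (∀ S, Continuous (D S)) → ∀ x x' : Fin n → ℝ,
    ENNReal.ofReal |D ∅ x - D ∅ x'| +
      (ENNReal.ofReal (1+p) ^ ((1:ℝ)/p)) ^ n *
        (∑ S : Finset (Fin n), ∫⁻ z, ENNReal.ofReal (|D S z| ^ p)) ^ ((1:ℝ)/p) ≤
      (∏ i, (ENNReal.ofReal (1+p) ^ ((1:ℝ)/p) +
          (ENNReal.ofReal |x i - x' i|) ^ ((p-1)/p))) *
        (∑ S : Finset (Fin n), ∫⁻ z, ENNReal.ofReal (|D S z| ^ p)) ^ ((1:ℝ)/p) := by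
  have hp0 : (0:ℝ) < p := lt_trans one_pos hp
  have h1p : (0:ℝ) < 1 + p := by linarith
  have hinvp : (0:ℝ) < 1/p := by apply div_pos one_pos hp0
  have hβ : (0:ℝ) ≤ (p-1)/p := div_nonneg (by linarith) hp0.le
  intro n
  induction n with
  | zero =>
    intro D _ _ x x'
    have hxx : x = x' := Subsingleton.elim x x'
    rw [hxx, sub_self, abs_zero, ENNReal.ofReal_zero, zero_add, pow_zero,
      show (Finset.univ : Finset (Fin 0)) = ∅ from Finset.univ_eq_empty, Finset.prod_empty]
  | succ n ih =>
    intro D hDderiv hDcont x x'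
    set A : ℝ≥0∞ := ENNReal.ofReal (1+p) ^ ((1:ℝ)/p) with hA
    set LL := ∑ S : Finset (Fin (n+1)), ∫⁻ z, ENNReal.ofReal (|D S z| ^ p) with hLL
    set NN := LL ^ ((1:ℝ)/p) with hNN
    have hAne0 : A ≠ 0 := by
      rw [hA]
      apply ne_of_gt
      apply ENNReal.rpow_pos (ENNReal.ofReal_pos.2 h1p) ENNReal.ofReal_ne_top
    have hAneTop : A ≠ ⊤ :=
      ENNReal.rpow_ne_top_of_nonneg hinvp.le ENNReal.ofReal_ne_top
    set δ : Fin (n+1) → ℝ≥0∞ := fun i => (ENNReal.ofReal |x i - x' i|) ^ ((p-1)/p) with hδ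
    have hδneTop : ∀ i, δ i ≠ ⊤ := fun i =>
      ENNReal.rpow_ne_top_of_nonneg hβ ENNReal.ofReal_ne_top
    by_cases hfin : LL = ⊤
    · have hNNtop : NN = ⊤ := by
        rw [hNN, hfin, ENNReal.top_rpow_of_pos hinvp]
      have hprodne : (∏ i, (A + δ i)) ≠ 0 := by
        rw [Finset.prod_ne_zero_iff]
        intro i _
        intro h
        exact hAne0 (by simpa using (add_eq_zero.1 h).1)
      rw [hNNtop, ENNReal.mul_top hprodne]
      exact le_top
    -- finite case
    have hNNneTop : NN ≠ ⊤ := by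
      rw [hNN]
      exact ENNReal.rpow_ne_top_of_nonneg hinvp.le hfin
    set e := sEmb n
    set xt := Fin.tail x with hxt
    set xt' := Fin.tail x' with hxt'
    set mid : Fin (n+1) → ℝ := Function.update x 0 (x' 0) with hmid
    have hmidc : mid = Fin.cons (x' 0) xt := update_zero_eq_cons x (x' 0)
    -- slice family at x' 0
    set D2 := sliceD D ∅ (x' 0) with hD2
    set LL2 := ∑ S : Finset (Fin n), ∫⁻ z, ENNReal.ofReal (|D2 S z| ^ p) with hLL2
    -- LL2 ≤ (1+p) * LL
    have hLL2le : LL2 ≤ ENNReal.ofReal (1+p) * LL := by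
      have hterm : ∀ S : Finset (Fin n),
          (∫⁻ z, ENNReal.ofReal (|D2 S z| ^ p)) ≤
          ENNReal.ofReal (1+p) *
            ((∫⁻ w, ENNReal.ofReal (|D (S.map e) w| ^ p)) +
              ∫⁻ w, ENNReal.ofReal (|D (insert 0 (S.map e)) w| ^ p)) := by
        intro S
        have h0 : (0 : Fin (n+1)) ∉ S.map e := by
          intro h
          rcases Finset.mem_map.1 h with ⟨i, _, hi⟩
          exact Fin.succ_ne_zero i hi
        have hzpt : ∀ z : Fin n → ℝ, ENNReal.ofReal (|D2 S z| ^ p) ≤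
            ENNReal.ofReal (1+p) * ∫⁻ t, ENNReal.ofReal
              (|D (S.map e) (Fin.cons t z)| ^ p +
                |D (insert 0 (S.map e)) (Fin.cons t z)| ^ p) := by
          intro z
          have hg : ∀ t, HasDerivAt (fun s => D (S.map e) (Fin.cons s z))
              (D (insert 0 (S.map e)) (Fin.cons t z)) t :=
            fun t => cons_deriv D hDderiv (S.map e) h0 z t
          have hg'c : Continuous fun t => D (insert 0 (S.map e)) (Fin.cons t z) :=
            (hDcont _).comp (continuous_cons_left z)
          have := oneD_sup hp hg hg'c (x' 0)
          simpa [hD2, sliceD] using this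
        calc (∫⁻ z, ENNReal.ofReal (|D2 S z| ^ p))
            ≤ ∫⁻ z, ENNReal.ofReal (1+p) * ∫⁻ t, ENNReal.ofReal
              (|D (S.map e) (Fin.cons t z)| ^ p +
                |D (insert 0 (S.map e)) (Fin.cons t z)| ^ p) := lintegral_mono hzpt
          _ = ENNReal.ofReal (1+p) * ∫⁻ z, ∫⁻ t, ENNReal.ofReal
              (|D (S.map e) (Fin.cons t z)| ^ p +
                |D (insert 0 (S.map e)) (Fin.cons t z)| ^ p) :=
              lintegral_const_mul' _ _ ENNReal.ofReal_ne_top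
          _ = ENNReal.ofReal (1+p) * ∫⁻ w, ENNReal.ofReal
              (|D (S.map e) w| ^ p + |D (insert 0 (S.map e)) w| ^ p) := by
              congr 1
              refine (lintegral_cons' (f := fun w => ENNReal.ofReal
                (|D (S.map e) w| ^ p + |D (insert 0 (S.map e)) w| ^ p)) ?_).symm
              exact (ENNReal.continuous_ofReal.comp
                ((((hDcont _).abs.rpow_const fun _ => Or.inr hp0.le).add
                  (((hDcont _).abs.rpow_const fun _ => Or.inr hp0.le))))).measurable
          _ = ENNReal.ofReal (1+p) *
              ((∫⁻ w, ENNReal.ofReal (|D (S.map e) w| ^ p)) +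
                ∫⁻ w, ENNReal.ofReal (|D (insert 0 (S.map e)) w| ^ p)) := by
              congr 1
              rw [← lintegral_add_left (meas_aux hp0.le hDcont _)]
              apply lintegral_congr
              intro w
              rw [ENNReal.ofReal_add (by positivity) (by positivity)]
      calc LL2 ≤ ∑ S : Finset (Fin n), ENNReal.ofReal (1+p) *
            ((∫⁻ w, ENNReal.ofReal (|D (S.map e) w| ^ p)) +
              ∫⁻ w, ENNReal.ofReal (|D (insert 0 (S.map e)) w| ^ p)) :=
            Finset.sum_le_sum fun S _ => hterm S
        _ = ENNReal.ofReal (1+p) *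
            ((∑ S : Finset (Fin n), ∫⁻ w, ENNReal.ofReal (|D (S.map e) w| ^ p)) +
              ∑ S : Finset (Fin n), ∫⁻ w, ENNReal.ofReal (|D (insert 0 (S.map e)) w| ^ p)) := by
            rw [← Finset.mul_sum, Finset.sum_add_distrib]
        _ = ENNReal.ofReal (1+p) * LL := by
            rw [sum_split (fun S' => ∫⁻ w, ENNReal.ofReal (|D S' w| ^ p))]
    set NN2 := LL2 ^ ((1:ℝ)/p) with hNN2
    have hNN2le : NN2 ≤ A * NN := by
      rw [hNN2, hNN, hA]
      calc LL2 ^ ((1:ℝ)/p) ≤ (ENNReal.ofReal (1+p) * LL) ^ ((1:ℝ)/p) :=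
            ENNReal.rpow_le_rpow hLL2le hinvp.le
        _ = ENNReal.ofReal (1+p) ^ ((1:ℝ)/p) * LL ^ ((1:ℝ)/p) :=
            ENNReal.mul_rpow_of_nonneg _ _ hinvp.le
    have hNN2neTop : NN2 ≠ ⊤ := by
      intro h
      rw [h] at hNN2le
      exact (lt_of_le_of_lt hNN2le (ENNReal.mul_lt_top hAneTop.lt_top hNNneTop.lt_top)).ne rfl
    -- term 2 estimate via IH
    have hIH := ih D2 (slice_deriv D hDderiv ∅ (fun i => Finset.notMem_empty _) (x' 0))
      (slice_cont D hDcont ∅ (x' 0)) xt xt'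
    have hD2e : D2 ∅ xt = D ∅ mid := by rw [hD2, sliceD, hmidc]; simp
    have hD2e' : D2 ∅ xt' = D ∅ x' := by
      rw [hD2, sliceD]
      simp only [Finset.map_empty, Finset.empty_union]
      congr 1
      exact Fin.cons_self_tail x'
    rw [hD2e, hD2e'] at hIH
    set P := ∏ i : Fin n, (A + (ENNReal.ofReal |xt i - xt' i|) ^ ((p-1)/p)) with hP
    have hAP : A ^ n ≤ P := by
      rw [hP]
      calc A ^ n = ∏ _i : Fin n, A := by rw [Finset.prod_const, Finset.card_univ,
            Fintype.card_fin]
        _ ≤ _ := Finset.prod_le_prod' fun i _ => le_self_add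
    have ht2 : ENNReal.ofReal |D ∅ mid - D ∅ x'| ≤ P * (A * NN) - A ^ n * (A * NN) := by
      have h1 : ENNReal.ofReal |D ∅ mid - D ∅ x'| ≤ P * NN2 - A ^ n * NN2 :=
        ENNReal.le_sub_of_add_le_right (ENNReal.mul_ne_top (by simp [ENNReal.pow_ne_top hAneTop]) hNN2neTop) hIH
      have h2 : P * NN2 - A ^ n * NN2 = (P - A ^ n) * NN2 := by
        rw [ENNReal.sub_mul fun _ _ => hNN2neTop]
      have h3 : (P - A ^ n) * NN2 ≤ (P - A ^ n) * (A * NN) :=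
        mul_le_mul_right hNN2le _
      have h4 : (P - A ^ n) * (A * NN) = P * (A * NN) - A ^ n * (A * NN) := by
        rw [ENNReal.sub_mul fun _ _ => ENNReal.mul_ne_top hAneTop hNNneTop]
      calc ENNReal.ofReal |D ∅ mid - D ∅ x'| ≤ P * NN2 - A ^ n * NN2 := h1
        _ = (P - A ^ n) * NN2 := h2
        _ ≤ (P - A ^ n) * (A * NN) := h3
        _ = P * (A * NN) - A ^ n * (A * NN) := h4
    -- term 1 estimate
    have ht1 : ENNReal.ofReal |D ∅ x - D ∅ mid| ≤ δ 0 * (A ^ n * NN) := by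
      have hgd : ∀ t, HasDerivAt (fun s => D ∅ (Function.update x 0 s))
          (D {0} (Function.update x 0 t)) t :=
        fun t => deriv0 D hDderiv ∅ (Finset.notMem_empty 0) x t
      have hg'c : Continuous fun t => D {0} (Function.update x 0 t) :=
        (hDcont _).comp (continuous_update_pt x 0)
      have hftc : ∫ t in (x' 0)..(x 0), D {0} (Function.update x 0 t) =
          D ∅ (Function.update x 0 (x 0)) - D ∅ (Function.update x 0 (x' 0)) :=
        intervalIntegral.integral_eq_sub_of_hasDerivAt (fun t _ => hgd t)
          (hg'c.intervalIntegrable _ _)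
      rw [Function.update_eq_self] at hftc
      have habs : |D ∅ x - D ∅ mid| ≤
          ∫ t in Set.uIoc (x' 0) (x 0), |D {0} (Function.update x 0 t)| := by
        rw [hmid, ← hftc]
        simpa [Real.norm_eq_abs] using intervalIntegral.norm_integral_le_integral_norm_uIoc
          (f := fun t => D {0} (Function.update x 0 t)) (a := x' 0) (b := x 0) (μ := volume)
      have hIOn : IntegrableOn (fun t => |D {0} (Function.update x 0 t)|)
          (Set.uIoc (x' 0) (x 0)) volume :=
        intervalIntegrable_iff.mp (hg'c.abs.intervalIntegrable _ _)
      have hvol : volume (Set.uIoc (x' 0) (x 0)) = ENNReal.ofReal |x 0 - x' 0| := by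
        rw [Set.uIoc, Real.volume_Ioc]
        congr 1
        rw [show (x' 0) ⊔ (x 0) - (x' 0) ⊓ (x 0) = max (x' 0) (x 0) - min (x' 0) (x 0) from rfl,
          max_sub_min_eq_abs, abs_sub_comm]
      have hpq : p.HolderConjugate (p/(p-1)) := by
        have := Real.HolderConjugate.conjExponent hp
        rwa [Real.conjExponent] at this
      have hfm : AEMeasurable (fun t => ENNReal.ofReal |D {0} (Function.update x 0 t)|)
          (volume.restrict (Set.uIoc (x' 0) (x 0))) :=
        (ENNReal.continuous_ofReal.comp hg'c.abs).measurable.aemeasurable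
      have hholder := ENNReal.lintegral_mul_le_Lp_mul_Lq
        (volume.restrict (Set.uIoc (x' 0) (x 0))) hpq hfm aemeasurable_const
        (g := fun _ => (1:ℝ≥0∞))
      simp only [Pi.mul_apply, mul_one, ENNReal.one_rpow, lintegral_one, Measure.restrict_apply,
        MeasurableSet.univ, Set.univ_inter] at hholder
      -- pointwise sup bound after Hölder
      have hsup : ∀ t, ENNReal.ofReal (|D {0} (Function.update x 0 t)| ^ p) ≤
          ENNReal.ofReal (1+p) ^ n *
            ∑ S : Finset (Fin n), ∫⁻ z, ENNReal.ofReal (|sliceD D {0} t S z| ^ p) := by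
        intro t
        have h := sup_bound hp n (sliceD D {0} t)
          (slice_deriv D hDderiv {0} (fun i => by simp [Fin.succ_ne_zero]) t)
          (slice_cont D hDcont {0} t) (Fin.tail x)
        rw [update_zero_eq_cons]
        simpa [sliceD, ← Finset.insert_eq] using h
      have hint2 : (∫⁻ t, ENNReal.ofReal (|D {0} (Function.update x 0 t)| ^ p)) ≤
          ENNReal.ofReal (1+p) ^ n * LL := by
        calc ∫⁻ t, ENNReal.ofReal (|D {0} (Function.update x 0 t)| ^ p)
            ≤ ∫⁻ t, ENNReal.ofReal (1+p) ^ n *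
              ∑ S : Finset (Fin n), ∫⁻ z, ENNReal.ofReal (|sliceD D {0} t S z| ^ p) :=
              lintegral_mono hsup
          _ = ENNReal.ofReal (1+p) ^ n * ∫⁻ t,
              ∑ S : Finset (Fin n), ∫⁻ z, ENNReal.ofReal (|sliceD D {0} t S z| ^ p) :=
              lintegral_const_mul' _ _ (ENNReal.pow_ne_top ENNReal.ofReal_ne_top)
          _ = ENNReal.ofReal (1+p) ^ n *
              ∑ S : Finset (Fin n), ∫⁻ t, ∫⁻ z, ENNReal.ofReal (|sliceD D {0} t S z| ^ p) := by
              congr 1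
              exact lintegral_finset_sum _ fun S _ => meas_slice hp0.le hDcont {0} S
          _ = ENNReal.ofReal (1+p) ^ n *
              ∑ S : Finset (Fin n), ∫⁻ w,
                ENNReal.ofReal (|D (insert 0 (S.map e)) w| ^ p) := by
              congr 1
              apply Finset.sum_congr rfl
              intro S _
              calc ∫⁻ t, ∫⁻ z, ENNReal.ofReal (|sliceD D {0} t S z| ^ p)
                  = ∫⁻ t, ∫⁻ z, ENNReal.ofReal
                      (|D (insert 0 (S.map e)) (Fin.cons t z)| ^ p) := by
                    simp [sliceD, ← Finset.insert_eq]; rfl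
                _ = ∫⁻ w, ENNReal.ofReal (|D (insert 0 (S.map e)) w| ^ p) :=
                    (lintegral_cons (meas_aux hp0.le hDcont _)).symm
          _ ≤ ENNReal.ofReal (1+p) ^ n * LL := by
              apply mul_le_mul_right
              rw [hLL, ← sum_split (fun S' => ∫⁻ w, ENNReal.ofReal (|D S' w| ^ p))]
              exact le_add_self
      have hpow : ((ENNReal.ofReal (1+p) ^ n : ℝ≥0∞)) ^ ((1:ℝ)/p) = A ^ n := by
        rw [hA, ← ENNReal.rpow_natCast (ENNReal.ofReal (1+p)) n,
          ← ENNReal.rpow_natCast (ENNReal.ofReal (1+p) ^ ((1:ℝ)/p)) n,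
          ← ENNReal.rpow_mul, ← ENNReal.rpow_mul, mul_comm]
      calc ENNReal.ofReal |D ∅ x - D ∅ mid|
          ≤ ENNReal.ofReal (∫ t in Set.uIoc (x' 0) (x 0), |D {0} (Function.update x 0 t)|) :=
            ENNReal.ofReal_le_ofReal habs
        _ = ∫⁻ t in Set.uIoc (x' 0) (x 0), ENNReal.ofReal |D {0} (Function.update x 0 t)| :=
            ofReal_integral_eq_lintegral_ofReal hIOn
              (Filter.Eventually.of_forall fun t => abs_nonneg _)
        _ ≤ (∫⁻ t in Set.uIoc (x' 0) (x 0),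
              (ENNReal.ofReal |D {0} (Function.update x 0 t)|) ^ p) ^ ((1:ℝ)/p) *
            (volume (Set.uIoc (x' 0) (x 0))) ^ (1/(p/(p-1))) := hholder
        _ ≤ (ENNReal.ofReal (1+p) ^ n * LL) ^ ((1:ℝ)/p) * δ 0 := by
            apply mul_le_mul'
            · apply ENNReal.rpow_le_rpow _ hinvp.le
              calc ∫⁻ t in Set.uIoc (x' 0) (x 0),
                    (ENNReal.ofReal |D {0} (Function.update x 0 t)|) ^ p
                  = ∫⁻ t in Set.uIoc (x' 0) (x 0),
                      ENNReal.ofReal (|D {0} (Function.update x 0 t)| ^ p) := by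
                    apply lintegral_congr
                    intro t
                    rw [ENNReal.ofReal_rpow_of_nonneg (abs_nonneg _) hp0.le]
                _ ≤ ∫⁻ t, ENNReal.ofReal (|D {0} (Function.update x 0 t)| ^ p) :=
                    setLIntegral_le_lintegral _ _
                _ ≤ ENNReal.ofReal (1+p) ^ n * LL := hint2
            · rw [hvol, hδ, one_div_div]
        _ = δ 0 * (A ^ n * NN) := by
            rw [ENNReal.mul_rpow_of_nonneg _ _ hinvp.le, hpow, hNN]
            ring
    -- combine
    have hsplitabs : ENNReal.ofReal |D ∅ x - D ∅ x'| ≤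
        ENNReal.ofReal |D ∅ x - D ∅ mid| + ENNReal.ofReal |D ∅ mid - D ∅ x'| := by
      rw [← ENNReal.ofReal_add (abs_nonneg _) (abs_nonneg _)]
      exact ENNReal.ofReal_le_ofReal (abs_sub_le _ _ _)
    have hprodsucc : (∏ i : Fin (n+1), (A + δ i)) = (A + δ 0) * P := by
      rw [Fin.prod_univ_succ]
      congr 1
    calc ENNReal.ofReal |D ∅ x - D ∅ x'| + A ^ (n+1) * NN
        ≤ (δ 0 * (A ^ n * NN) + (P * (A * NN) - A ^ n * (A * NN))) + A ^ (n+1) * NN := by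
          exact add_le_add (le_trans hsplitabs (add_le_add ht1 ht2)) le_rfl
      _ = δ 0 * (A ^ n * NN) + ((P * (A * NN) - A ^ n * (A * NN)) + A ^ n * (A * NN)) := by
          rw [add_assoc]
          congr 2
          rw [pow_succ]
          ring
      _ = δ 0 * (A ^ n * NN) + P * (A * NN) := by
          rw [tsub_add_cancel_of_le (mul_le_mul_left hAP _)]
      _ ≤ δ 0 * (P * NN) + P * (A * NN) :=
          add_le_add (mul_le_mul_right (mul_le_mul_left hAP _) _) le_rfl
      _ = (A + δ 0) * (P * NN) := by ring
      _ = (∏ i : Fin (n+1), (A + δ i)) * NN := by rw [hprodsucc]; ring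


end OscAux

/-- Euclidean distance on ℝⁿ. -/
noncomputable def euclDist {n : ℕ} (x y : Fin n → ℝ) : ℝ :=
  Real.sqrt (∑ i, (x i - y i) ^ 2)

/-- **Pointwise oscillation estimate for smooth functions in `S_p^1(ℝⁿ)`, `1 < p < ∞`.**
If `u` is Cⁿ on ℝⁿ (its mixed partials with distinct indices encoded by `D`, with
`D ∅ = u`), and all mixed partials `D S` lie in `Lᵖ(ℝⁿ)`, then for all `x, x' ∈ ℝⁿ`:
`|u(x) − u(x')| ≤ [((1+p)^{1/p} + |x−x'|^{(p−1)/p})ⁿ − (1+p)^{n/p}] ‖u‖_{S_p^1(ℝⁿ)}`,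
where `‖u‖_{S_p^1} = (Σ_S ‖D S‖_{Lᵖ}ᵖ)^{1/p}` (the sum running over all subsets `S`,
`S = ∅` giving the `‖u‖_{Lᵖ}ᵖ` term) and `|x − x'|` is the Euclidean distance. -/
theorem oscillation_estimate_Sp1 {n : ℕ} (p : ℝ) (hp : 1 < p)
    (u : (Fin n → ℝ) → ℝ)
    (D : Finset (Fin n) → (Fin n → ℝ) → ℝ)
    (hD0 : D ∅ = u)
    (hDderiv : ∀ (S : Finset (Fin n)) (i : Fin n), i ∉ S → ∀ η : Fin n → ℝ,
      HasDerivAt (fun t => D S (Function.update η i t)) (D (insert i S) η) (η i))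
    (hDcont : ∀ S, Continuous (D S))
    (hDLp : ∀ S : Finset (Fin n), Integrable (fun y => |D S y| ^ p))
    (x x' : Fin n → ℝ) :
    |u x - u x'| ≤
      (((1 + p) ^ (1 / p) + euclDist x x' ^ ((p - 1) / p)) ^ n - (1 + p) ^ ((n : ℝ) / p)) *
        (∑ S : Finset (Fin n), ∫ y, |D S y| ^ p) ^ (1 / p) := by
  subst hD0
  have hp0 : (0:ℝ) < p := lt_trans one_pos hp
  have h1p : (0:ℝ) < 1 + p := by linarith
  have hinvp : (0:ℝ) < 1/p := div_pos one_pos hp0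
  have hβ : (0:ℝ) ≤ (p-1)/p := div_nonneg (by linarith) hp0.le
  have h := OscAux.main_aux hp n D hDderiv hDcont x x'
  set I : ℝ := ∑ S : Finset (Fin n), ∫ y, |D S y| ^ p with hI
  have hInn : 0 ≤ I := Finset.sum_nonneg fun S _ =>
    integral_nonneg fun y => by positivity
  have hLLI : (∑ S : Finset (Fin n), ∫⁻ z, ENNReal.ofReal (|D S z| ^ p)) =
      ENNReal.ofReal I := by
    rw [hI, ENNReal.ofReal_sum_of_nonneg fun S _ => integral_nonneg fun y => by positivity]
    apply Finset.sum_congr rfl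
    intro S _
    exact (ofReal_integral_eq_lintegral_ofReal (hDLp S)
      (Filter.Eventually.of_forall fun y => by positivity)).symm
  set d := euclDist x x' with hd
  have hd0 : 0 ≤ d := Real.sqrt_nonneg _
  have hdi : ∀ i, |x i - x' i| ≤ d := by
    intro i
    have h1 : (x i - x' i)^2 ≤ ∑ j, (x j - x' j)^2 :=
      Finset.single_le_sum (f := fun j => (x j - x' j)^2)
        (fun j _ => sq_nonneg _) (Finset.mem_univ i)
    calc |x i - x' i| = Real.sqrt ((x i - x' i)^2) := (Real.sqrt_sq_eq_abs _).symm
      _ ≤ d := Real.sqrt_le_sqrt h1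
  set C1 : ℝ := (1 + p) ^ ((1:ℝ)/p) with hC1
  have hC1nn : 0 ≤ C1 := Real.rpow_nonneg h1p.le _
  have hAC1 : (ENNReal.ofReal (1+p)) ^ ((1:ℝ)/p) = ENNReal.ofReal C1 :=
    ENNReal.ofReal_rpow_of_nonneg h1p.le hinvp.le
  have hNNI : (∑ S : Finset (Fin n), ∫⁻ z, ENNReal.ofReal (|D S z| ^ p)) ^ ((1:ℝ)/p) =
      ENNReal.ofReal (I ^ ((1:ℝ)/p)) := by
    rw [hLLI, ENNReal.ofReal_rpow_of_nonneg hInn hinvp.le]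
  -- bound the product by the power of the euclidean distance
  have hprod : (∏ i, (ENNReal.ofReal (1+p) ^ ((1:ℝ)/p) +
      (ENNReal.ofReal |x i - x' i|) ^ ((p-1)/p))) ≤
      ENNReal.ofReal ((C1 + d ^ ((p-1)/p)) ^ n) := by
    have hfac : ∀ i : Fin n, (ENNReal.ofReal (1+p) ^ ((1:ℝ)/p) +
        (ENNReal.ofReal |x i - x' i|) ^ ((p-1)/p)) ≤
        ENNReal.ofReal (C1 + d ^ ((p-1)/p)) := by
      intro i
      rw [ENNReal.ofReal_add hC1nn (Real.rpow_nonneg hd0 _), hAC1]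
      apply add_le_add_right
      rw [ENNReal.ofReal_rpow_of_nonneg (abs_nonneg _) hβ]
      exact ENNReal.ofReal_le_ofReal (Real.rpow_le_rpow (abs_nonneg _) (hdi i) hβ)
    calc (∏ i, (ENNReal.ofReal (1+p) ^ ((1:ℝ)/p) +
          (ENNReal.ofReal |x i - x' i|) ^ ((p-1)/p)))
        ≤ ∏ _i : Fin n, ENNReal.ofReal (C1 + d ^ ((p-1)/p)) :=
          Finset.prod_le_prod' fun i _ => hfac i
      _ = ENNReal.ofReal (C1 + d ^ ((p-1)/p)) ^ n := by
          rw [Finset.prod_const, Finset.card_univ, Fintype.card_fin]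
      _ = ENNReal.ofReal ((C1 + d ^ ((p-1)/p)) ^ n) := by
          rw [ENNReal.ofReal_pow (by positivity)]
  have hApow : ((ENNReal.ofReal (1+p)) ^ ((1:ℝ)/p)) ^ n = ENNReal.ofReal (C1 ^ n) := by
    rw [hAC1, ENNReal.ofReal_pow hC1nn]
  -- assemble: ofReal (|..| + C1^n * I^{1/p}) ≤ ofReal ((C1 + d^β)^n * I^{1/p})
  have hkey : |D ∅ x - D ∅ x'| + C1 ^ n * I ^ ((1:ℝ)/p) ≤
      (C1 + d ^ ((p-1)/p)) ^ n * I ^ ((1:ℝ)/p) := by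
    rw [← ENNReal.ofReal_le_ofReal_iff (by positivity)]
    calc ENNReal.ofReal (|D ∅ x - D ∅ x'| + C1 ^ n * I ^ ((1:ℝ)/p))
        = ENNReal.ofReal |D ∅ x - D ∅ x'| +
            ENNReal.ofReal (C1 ^ n) * ENNReal.ofReal (I ^ ((1:ℝ)/p)) := by
          rw [ENNReal.ofReal_add (abs_nonneg _) (by positivity), ENNReal.ofReal_mul
            (by positivity)]
      _ ≤ ENNReal.ofReal ((C1 + d ^ ((p-1)/p)) ^ n) * ENNReal.ofReal (I ^ ((1:ℝ)/p)) := by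
          rw [← hApow, ← hNNI]
          exact le_trans h (mul_le_mul' hprod le_rfl)
      _ = ENNReal.ofReal ((C1 + d ^ ((p-1)/p)) ^ n * I ^ ((1:ℝ)/p)) :=
          (ENNReal.ofReal_mul (by positivity)).symm
  -- identify the constants with the statement's form
  have hC1n : C1 ^ n = (1 + p) ^ ((n:ℝ)/p) := by
    rw [hC1, ← Real.rpow_natCast ((1+p) ^ ((1:ℝ)/p)) n, ← Real.rpow_mul h1p.le]
    congr 1
    field_simp
  have honedivp : (1:ℝ)/p = 1/p := rfl
  have : |D ∅ x - D ∅ x'| ≤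
      ((C1 + d ^ ((p-1)/p)) ^ n - (1 + p) ^ ((n:ℝ)/p)) * I ^ ((1:ℝ)/p) := by
    rw [sub_mul, ← hC1n]
    linarith
  calc |D ∅ x - D ∅ x'| ≤
      ((C1 + d ^ ((p-1)/p)) ^ n - (1 + p) ^ ((n:ℝ)/p)) * I ^ ((1:ℝ)/p) := this
    _ = (((1 + p) ^ (1/p) + d ^ ((p - 1)/p)) ^ n - (1 + p) ^ ((n : ℝ)/p)) * I ^ (1/p) := by
        rw [hC1]
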